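/- Let X be a locally compact Tychonoff space and let Y = X ∪ {p} be a one-point Tychonoff extension of X. Then Y is Čech-complete if and only if Θ_X(Y) = τ_Y⁻¹(p) is a zero-set of the subspace βX\X. -/

import Mathlib

open Set Topology Filter

universe u

/-- A one-point Tychonoff extension of `X`: a Tychonoff space containing (a homeomorphic copy
of) `X` as a dense subspace whose complement is a single point `pt`. -/
structure OnePointExt (X : Type u) [TopologicalSpace X] : Type (u + 1) where
  carrier : Type u
  top : TopologicalSpace carrier
  t35 : @T35Space carrier top
  ι : X → carrier
  emb : @Topology.IsEmbedding X carrier _ top ι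
  pt : carrier
  range_eq : Set.range ι = {pt}ᶜ
  dense : @DenseRange carrier top X ι

attribute [instance] OnePointExt.top OnePointExt.t35

variable {X : Type u} [TopologicalSpace X]

/-- The partial order on one-point extensions: `Y₁ ≤ Y₂` iff there is a continuous map from
`Y₂` into `Y₁` fixing `X` pointwise. -/
def OnePointExt.le (Y1 Y2 : OnePointExt X) : Prop :=
  ∃ f : Y2.carrier → Y1.carrier, Continuous f ∧ ∀ x, f (Y2.ι x) = Y1.ι x

/-- Equivalence of extensions: a homeomorphism fixing `X` pointwise. -/
def OnePointExt.equiv (Y1 Y2 : OnePointExt X) : Prop :=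
  ∃ h : Y1.carrier ≃ₜ Y2.carrier, ∀ x, h (Y1.ι x) = Y2.ι x

/-- `τ_Y : βX → βY`, the unique continuous extension of `id_X`. -/
noncomputable def OnePointExt.tau (Y : OnePointExt X) : StoneCech X → StoneCech Y.carrier :=
  stoneCechExtend (continuous_stoneCechUnit.comp Y.emb.continuous)

/-- `Θ_X(Y) = τ_Y⁻¹(Y \ X)`, a subset of `βX`. -/
noncomputable def OnePointExt.theta (Y : OnePointExt X) : Set (StoneCech X) :=
  Y.tau ⁻¹' {stoneCechUnit Y.pt}

/-- A zero-set: `f⁻¹(0)` for a continuous `f : Z → [0,1]`. -/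
def IsZeroSet {Z : Type u} [TopologicalSpace Z] (A : Set Z) : Prop :=
  ∃ f : Z → unitInterval, Continuous f ∧ A = f ⁻¹' {0}

/-- A cozero-set: a complement of a zero-set. -/
def IsCozeroSet {Z : Type u} [TopologicalSpace Z] (A : Set Z) : Prop :=
  ∃ f : Z → unitInterval, Continuous f ∧ A = (f ⁻¹' {0})ᶜ

/-- `λ_P X = ⋃ { int_{βX} cl_{βX} C : C a cozero-set of X whose closure in X has P }`. -/
def lambdaP (P : (Z : Type u) → [TopologicalSpace Z] → Prop) (X : Type u)
    [TopologicalSpace X] : Set (StoneCech X) :=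
  ⋃ C ∈ {C : Set X | IsCozeroSet C ∧ P (closure C)},
    interior (closure (stoneCechUnit '' C))

/-- A pseudocompact space: every continuous real-valued function is bounded. -/
def Pseudocompact (Z : Type u) [TopologicalSpace Z] : Prop :=
  ∀ f : Z → ℝ, Continuous f → ∃ M, ∀ z, |f z| ≤ M

/-- `P` is a topological property: it is invariant under homeomorphisms. -/
def TopProperty (P : (Z : Type u) → [TopologicalSpace Z] → Prop) : Prop :=
  ∀ (Z W : Type u) [TopologicalSpace Z] [TopologicalSpace W], Z ≃ₜ W → P Z → P W

/-- `P` is closed hereditary: closed subspaces of a space with `P` have `P`. -/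
def ClosedHereditary (P : (Z : Type u) → [TopologicalSpace Z] → Prop) : Prop :=
  ∀ (Z : Type u) [TopologicalSpace Z], P Z → ∀ F : Set Z, IsClosed F → P F

/-- `P` is preserved under finite closed sums of subspaces. -/
def FiniteClosedSums (P : (Z : Type u) → [TopologicalSpace Z] → Prop) : Prop :=
  ∀ (Z : Type u) [TopologicalSpace Z] [T2Space Z] (n : ℕ) (F : Fin n → Set Z),
    (∀ i, IsClosed (F i)) → (∀ i, P (F i)) → (⋃ i, F i) = univ → P Z

/-- `P` is preserved under locally finite closed sums of subspaces. -/
def LocallyFiniteClosedSums (P : (Z : Type u) → [TopologicalSpace Z] → Prop) : Prop :=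
  ∀ (Z : Type u) [TopologicalSpace Z] [T2Space Z] (ι : Type u) (F : ι → Set Z),
    LocallyFinite F → (∀ i, IsClosed (F i)) → (∀ i, P (F i)) → (⋃ i, F i) = univ → P Z

/-- `P` is preserved under countable closed sums of subspaces. -/
def CountableClosedSums (P : (Z : Type u) → [TopologicalSpace Z] → Prop) : Prop :=
  ∀ (Z : Type u) [TopologicalSpace Z] [T2Space Z] (F : ℕ → Set Z),
    (∀ i, IsClosed (F i)) → (∀ i, P (F i)) → (⋃ i, F i) = univ → P Z

/-- Mrówka's condition (W): if a Tychonoff space `T` has a point `p` with an open base `B` at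
`p` such that `T \ b` has `P` for each `b ∈ B`, then `T` has `P`. -/
def MrowkaW (P : (Z : Type u) → [TopologicalSpace Z] → Prop) : Prop :=
  ∀ (T : Type u) [TopologicalSpace T] [T35Space T] (p : T) (B : Set (Set T)),
    (∀ b ∈ B, IsOpen b ∧ p ∈ b) →
    (∀ V : Set T, IsOpen V → p ∈ V → ∃ b ∈ B, b ⊆ V) →
    (∀ b ∈ B, P (↥(bᶜ))) → P T

/-- `X` is locally-P: every point has an open neighborhood whose closure has `P`. -/
def LocallyP (P : (Z : Type u) → [TopologicalSpace Z] → Prop)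
    (X : Type u) [TopologicalSpace X] : Prop :=
  ∀ x : X, ∃ U : Set X, IsOpen U ∧ x ∈ U ∧ P (closure U)

/-- `P` coincides with pseudocompactness. -/
def IsPseudocompactness (P : (Z : Type u) → [TopologicalSpace Z] → Prop) : Prop :=
  ∀ (Z : Type u) [TopologicalSpace Z], P Z ↔ Pseudocompact Z

/-- A `P`-far one-point extension: for every zero-set `Z` of `X` contained in a cozero-set `C`
of `X` whose closure has `P`, the closure of `Z` in the extension misses the remainder. -/
def OnePointExt.PFar (P : (Z : Type u) → [TopologicalSpace Z] → Prop)
    (Y : OnePointExt X) : Prop :=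
  ∀ Z C : Set X, IsZeroSet Z → IsCozeroSet C → P (closure C) → Z ⊆ C →
    Y.pt ∉ closure (Y.ι '' Z)

/-- Čech-complete: `Z` is a Gδ-set in `βZ`. -/
def CechComplete (Z : Type u) [TopologicalSpace Z] : Prop :=
  IsGδ (Set.range (stoneCechUnit : Z → StoneCech Z))

/-- The extension is first countable at the added point. -/
def OnePointExt.FirstCountableAtPt (Y : OnePointExt X) : Prop :=
  (𝓝 Y.pt).IsCountablyGenerated

/-- Strong zero-dimensionality: `βX` has an open base of clopen sets. -/
def StronglyZeroDimensional (X : Type u) [TopologicalSpace X] : Prop :=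
  ∀ U : Set (StoneCech X), IsOpen U → ∀ x ∈ U,
    ∃ V : Set (StoneCech X), IsClopen V ∧ x ∈ V ∧ V ⊆ U

/-- `Δ` is an order-isomorphism from the subset `A` of one-point extensions of `X` (with the
order `≤`) onto the subset `B` of one-point extensions of `Y`, where extensions are regarded
up to the equivalence `OnePointExt.equiv`: `Δ` maps `A` into `B`, reflects and preserves `≤`
on `A`, and every member of `B` is equivalent to the image of a member of `A`. -/
def RestrictedOrderIso {X Y : Type u} [TopologicalSpace X] [TopologicalSpace Y]
    (A : Set (OnePointExt X)) (B : Set (OnePointExt Y))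
    (Δ : OnePointExt X → OnePointExt Y) : Prop :=
  (∀ T ∈ A, Δ T ∈ B) ∧
  (∀ T1 ∈ A, ∀ T2 ∈ A, (T1.le T2 ↔ (Δ T1).le (Δ T2))) ∧
  (∀ S ∈ B, ∃ T ∈ A, (Δ T).equiv S)


section AuxStmt5

/-- `stoneCechUnit` is an embedding for Tychonoff spaces. -/
theorem aux_isEmbedding_stoneCechUnit {α : Type*} [TopologicalSpace α] [T35Space α] :
    Topology.IsEmbedding (stoneCechUnit : α → StoneCech α) := by
  refine ⟨Topology.isInducing_iff_nhds.2 fun x => le_antisymm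
      ((continuous_stoneCechUnit.tendsto x).le_comap) (fun U hU => ?_),
    injective_stoneCechUnit_of_t35Space⟩
  rcases mem_nhds_iff.1 hU with ⟨V, hVU, hVo, hxV⟩
  obtain ⟨f, hfc, hf0, hf1⟩ := CompletelyRegularSpace.completely_regular x Vᶜ
      hVo.isClosed_compl (fun h => h hxV)
  refine Filter.mem_comap.2 ⟨stoneCechExtend hfc ⁻¹' {y | (y : ℝ) < 1}, ?_, ?_⟩
  · refine IsOpen.mem_nhds
      ((isOpen_Iio.preimage continuous_subtype_val).preimage (continuous_stoneCechExtend hfc)) ?_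
    show ((stoneCechExtend hfc (stoneCechUnit x) : unitInterval) : ℝ) < 1
    have hx0 : stoneCechExtend hfc (stoneCechUnit x) = f x :=
      congrFun (stoneCechExtend_extends hfc) x
    rw [hx0, hf0]
    norm_num
  · intro z hz
    have hzlt : ((f z : unitInterval) : ℝ) < 1 := by
      have hx0 : stoneCechExtend hfc (stoneCechUnit z) = f z :=
        congrFun (stoneCechExtend_extends hfc) z
      simpa [hx0] using hz
    have hzV : z ∈ V := by
      by_contra h
      have : f z = 1 := hf1 h
      rw [this] at hzlt
      norm_num at hzlt
    exact hVU hzV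

/-- A dense embedding of a locally compact space into a Hausdorff space is open. -/
theorem aux_isOpenEmbedding {α β : Type*} [TopologicalSpace α] [TopologicalSpace β]
    [LocallyCompactSpace α] [T2Space β] {E : α → β} (he : Topology.IsEmbedding E)
    (hd : DenseRange E) : Topology.IsOpenEmbedding E := by
  refine ⟨he, isOpen_iff_forall_mem_open.2 ?_⟩
  rintro _ ⟨x, rfl⟩
  obtain ⟨C, hCc, hCn⟩ := exists_compact_mem_nhds x
  obtain ⟨U, hUo, hUpre⟩ := he.toIsInducing.isOpen_iff.1 (isOpen_interior (s := C))
  have h2 : E '' interior C = U ∩ range E := by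
    rw [← hUpre, Set.image_preimage_eq_inter_range]
  have hsub : U ⊆ E '' C := by
    have h1 : U ⊆ closure (U ∩ Set.range E) := hd.open_subset_closure_inter hUo
    have h3 : closure (E '' interior C) ⊆ E '' C :=
      closure_minimal (Set.image_mono interior_subset)
        (hCc.image he.continuous).isClosed
    intro y hy
    exact h3 (by rw [h2]; exact h1 hy)
  refine ⟨U, fun y hy => Set.image_subset_range _ _ (hsub hy), hUo, ?_⟩
  have hx : x ∈ interior C := mem_interior_iff_mem_nhds.2 hCn
  rw [← hUpre] at hx
  exact hx

theorem aux_isGδ_preimage {α β : Type*} [TopologicalSpace α] [TopologicalSpace β] {f : α → β}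
    (hf : Continuous f) {s : Set β} (hs : IsGδ s) : IsGδ (f ⁻¹' s) := by
  obtain ⟨g, hgo, rfl⟩ := hs.eq_iInter_nat
  rw [Set.preimage_iInter]
  exact .iInter_of_isOpen fun n => (hgo n).preimage hf

/-- A closed Gδ subset of a compact Hausdorff space is a zero-set. -/
theorem aux_isZeroSet_of_isClosed_isGδ {Z : Type u} [TopologicalSpace Z] [CompactSpace Z]
    [T2Space Z] {F : Set Z} (hFc : IsClosed F) (hF : IsGδ F) : IsZeroSet F := by
  obtain ⟨f, hf1, -, -, hficc⟩ := exists_continuous_one_zero_of_isCompact_of_isGδ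
    hFc.isCompact hF isClosed_empty (disjoint_empty _)
  refine ⟨fun z => Set.projIcc (0 : ℝ) 1 zero_le_one (1 - f z),
    continuous_projIcc.comp (continuous_const.sub f.continuous), ?_⟩
  ext z
  simp only [mem_preimage, mem_singleton_iff]
  have h0 : (0 : unitInterval) = ⟨(0 : ℝ), left_mem_Icc.mpr zero_le_one⟩ := rfl
  rw [h0, Set.projIcc_eq_left zero_lt_one, sub_nonpos]
  constructor
  · intro hz
    have : f z = 1 := by
      have := hf1.subset hz
      simpa using this
    rw [this]
  · intro hz
    have : f z = 1 := le_antisymm (hficc z).2 hz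
    rw [hf1]
    simpa using this

end AuxStmt5

/-- Let `X` be a locally compact Tychonoff space and `Y = X ∪ {p}` a one-point
Tychonoff extension of `X`.  Then `Y` is Čech-complete if and only if `Θ_X(Y) = τ_Y⁻¹(p)` is a
zero-set of the subspace `βX \ X`. -/
theorem stmt5 {X : Type u} [TopologicalSpace X] [T35Space X] [LocallyCompactSpace X]
    (Y : OnePointExt X) :
    CechComplete Y.carrier ↔
      IsZeroSet ((Subtype.val ⁻¹' Y.theta :
        Set ↥((Set.range (stoneCechUnit : X → StoneCech X))ᶜ))) := by
  classical
  have htauc : Continuous Y.tau := continuous_stoneCechExtend _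
  set j : X → StoneCech Y.carrier := stoneCechUnit ∘ Y.ι with hjdef
  have hj : ∀ x : X, Y.tau (stoneCechUnit x) = j x := fun x =>
    congrFun (stoneCechExtend_extends (continuous_stoneCechUnit.comp Y.emb.continuous)) x
  have hjemb : Topology.IsEmbedding j := aux_isEmbedding_stoneCechUnit.comp Y.emb
  have hjd : DenseRange j :=
    denseRange_stoneCechUnit.comp Y.dense continuous_stoneCechUnit
  have hjoe : Topology.IsOpenEmbedding j := aux_isOpenEmbedding hjemb hjd
  have hXoe : Topology.IsOpenEmbedding (stoneCechUnit : X → StoneCech X) :=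
    aux_isOpenEmbedding aux_isEmbedding_stoneCechUnit denseRange_stoneCechUnit
  -- surjectivity of `τ`
  have hsurj : Function.Surjective Y.tau := by
    intro y
    have hclosed : IsClosed (Set.range Y.tau) := (isCompact_range htauc).isClosed
    have hsub : Set.range j ⊆ Set.range Y.tau := by
      rintro _ ⟨x, rfl⟩; exact ⟨stoneCechUnit x, hj x⟩
    have hcl : closure (Set.range j) ⊆ Set.range Y.tau := closure_minimal hsub hclosed
    exact hcl (hjd y)
  -- the key fiber computation : `τ ⁻¹ (range j) = range stoneCechUnit`
  have hpre : Y.tau ⁻¹' (Set.range j) = Set.range (stoneCechUnit : X → StoneCech X) := by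
    apply Set.Subset.antisymm
    · rintro q hq
      obtain ⟨x, hx⟩ := hq
      obtain ⟨C, hCc, hCn⟩ := exists_compact_mem_nhds x
      set V := interior C with hV
      have hxV : x ∈ V := mem_interior_iff_mem_nhds.2 hCn
      have hCclosed : IsClosed (stoneCechUnit '' C) :=
        (hCc.image continuous_stoneCechUnit).isClosed
      have hCV : C ∪ (Set.univ \ V) = Set.univ := by
        apply Set.eq_univ_of_forall
        intro z
        by_cases hz : z ∈ V
        · exact Or.inl (interior_subset hz)
        · exact Or.inr ⟨trivial, hz⟩
      have hXcover : closure (stoneCechUnit '' C) ∪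
          closure (stoneCechUnit '' (Set.univ \ V)) = Set.univ := by
        rw [← closure_union, ← Set.image_union, hCV, Set.image_univ]
        exact denseRange_stoneCechUnit.closure_eq
      have hq' : q ∈ closure (stoneCechUnit '' C) ∪
          closure (stoneCechUnit '' (Set.univ \ V)) := by
        rw [hXcover]; exact Set.mem_univ q
      rcases hq' with h | h
      · rw [hCclosed.closure_eq] at h
        exact Set.image_subset_range _ _ h
      · exfalso
        have h1 : Y.tau q ∈ closure (j '' (Set.univ \ V)) := by
          have h2 : Y.tau '' closure (stoneCechUnit '' (Set.univ \ V)) ⊆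
              closure (Y.tau '' (stoneCechUnit '' (Set.univ \ V))) :=
            image_closure_subset_closure_image htauc
          have h3 : Y.tau '' (stoneCechUnit '' (Set.univ \ V)) = j '' (Set.univ \ V) := by
            rw [← Set.image_comp]
            exact Set.image_congr fun z _ => hj z
          exact h3 ▸ h2 ⟨q, h, rfl⟩
        have h4 : Y.tau q ∈ j '' V := ⟨x, hxV, hx⟩
        have hdisj : Disjoint (j '' V) (closure (j '' (Set.univ \ V))) := by
          refine Disjoint.closure_right ?_ (hjoe.isOpenMap V isOpen_interior)
          rw [Set.disjoint_iff_inter_eq_empty, ← Set.image_inter hjemb.injective]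
          have : V ∩ (Set.univ \ V) = ∅ := by
            ext w; simp
          rw [this, Set.image_empty]
        exact Set.disjoint_left.1 hdisj h4 h1
    · rintro _ ⟨x, rfl⟩
      exact ⟨x, (hj x).symm⟩
  -- the point `p'` is not in the image of `X`
  have hpnot : stoneCechUnit Y.pt ∉ Set.range j := by
    rintro ⟨x, hx⟩
    have hxpt : Y.ι x = Y.pt := injective_stoneCechUnit_of_t35Space hx
    have hmem : Y.ι x ∈ Set.range Y.ι := ⟨x, rfl⟩
    rw [Y.range_eq] at hmem
    exact hmem (Set.mem_singleton_iff.2 hxpt)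
  -- `range stoneCechUnit = range j ∪ {p'}` in `βY`
  have hruY : Set.range (stoneCechUnit : Y.carrier → StoneCech Y.carrier)
      = Set.range j ∪ {stoneCechUnit Y.pt} := by
    apply Set.Subset.antisymm
    · rintro _ ⟨y, rfl⟩
      by_cases hy : y = Y.pt
      · exact Or.inr (by rw [hy]; rfl)
      · have hmem : y ∈ Set.range Y.ι := by
          rw [Y.range_eq]; exact hy
        obtain ⟨x, rfl⟩ := hmem
        exact Or.inl ⟨x, rfl⟩
    · rintro z (⟨x, rfl⟩ | hz)
      · exact ⟨Y.ι x, rfl⟩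
      · exact ⟨Y.pt, (Set.mem_singleton_iff.1 hz).symm⟩
  -- the two compact remainders
  set KX : Set (StoneCech X) := (Set.range (stoneCechUnit : X → StoneCech X))ᶜ with hKX
  set KY : Set (StoneCech Y.carrier) := (Set.range j)ᶜ with hKY
  have hKXc : IsClosed KX := hXoe.isOpen_range.isClosed_compl
  have hKYc : IsClosed KY := hjoe.isOpen_range.isClosed_compl
  haveI : CompactSpace KX := isCompact_iff_compactSpace.1 hKXc.isCompact
  haveI : CompactSpace KY := isCompact_iff_compactSpace.1 hKYc.isCompact
  have hpK : stoneCechUnit Y.pt ∈ KY := hpnot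
  set p0 : KY := ⟨stoneCechUnit Y.pt, hpK⟩ with hp0
  -- the induced map between remainders
  have hgmem : ∀ z : KX, Y.tau z.1 ∈ KY := by
    intro z hmem
    exact z.2 (by rw [← hpre]; exact hmem)
  set g : KX → KY := fun z => ⟨Y.tau z.1, hgmem z⟩ with hgdef
  have hgc : Continuous g := (htauc.comp continuous_subtype_val).subtype_mk _
  have hgsurj : Function.Surjective g := by
    rintro ⟨z, hz⟩
    obtain ⟨q, hq⟩ := hsurj z
    have hqK : q ∈ KX := by
      intro hmem
      obtain ⟨x, rfl⟩ := hmem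
      exact hz ⟨x, (hj x).symm.trans hq⟩
    exact ⟨⟨q, hqK⟩, Subtype.ext hq⟩
  -- identification of the set in question
  have hth : (Subtype.val ⁻¹' Y.theta : Set KX) = g ⁻¹' {p0} := by
    ext z
    simp only [Set.mem_preimage, OnePointExt.theta, Set.mem_singleton_iff]
    exact ⟨fun h => Subtype.ext h, fun h => congrArg Subtype.val h⟩
  -- Step 1 : Čech-completeness of `Y` ↔ `{p0}` is Gδ in the remainder of `βY`
  have hstep1 : CechComplete Y.carrier ↔ IsGδ ({p0} : Set KY) := by
    unfold CechComplete
    rw [hruY]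
    constructor
    · intro h
      have h2 : (Subtype.val ⁻¹' (Set.range j ∪ {stoneCechUnit Y.pt}) : Set KY) = {p0} := by
        ext z
        simp only [Set.mem_preimage, Set.mem_union, Set.mem_singleton_iff]
        constructor
        · rintro (hz | hz)
          · exact absurd hz z.2
          · exact Subtype.ext hz
        · rintro rfl; exact Or.inr rfl
      rw [← h2]
      exact aux_isGδ_preimage continuous_subtype_val h
    · intro h
      obtain ⟨T, hTo, hTeq⟩ := h.eq_iInter_nat
      choose U hUo hUeq using fun n => (isOpen_induced_iff.1 (hTo n))
      have hiff : Set.range j ∪ {stoneCechUnit Y.pt} = ⋂ n, (U n ∪ Set.range j) := by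
        apply Set.Subset.antisymm
        · intro z hz
          rcases hz with hz | hz
          · exact Set.mem_iInter.2 fun n => Or.inr hz
          · refine Set.mem_iInter.2 fun n => Or.inl ?_
            have hp0T : p0 ∈ T n := by
              have : p0 ∈ ⋂ m, T m := by
                rw [← hTeq]; rfl
              exact Set.mem_iInter.1 this n
            rw [← hUeq n] at hp0T
            rw [Set.mem_singleton_iff.1 hz]
            exact hp0T
        · intro z hz
          by_cases hzj : z ∈ Set.range j
          · exact Or.inl hzj
          · right
            have hzK : z ∈ KY := hzj
            have hmem : (⟨z, hzK⟩ : KY) ∈ ⋂ n, T n := Set.mem_iInter.2 fun n => by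
              rw [← hUeq n]
              exact (Set.mem_iInter.1 hz n).resolve_right hzj
            rw [← hTeq] at hmem
            exact Set.mem_singleton_iff.2 (congrArg Subtype.val hmem)
      rw [hiff]
      exact .iInter_of_isOpen fun n => (hUo n).union hjoe.isOpen_range
  constructor
  · -- Čech-complete → zero-set
    intro h
    obtain ⟨f, hfc, hfeq⟩ :=
      aux_isZeroSet_of_isClosed_isGδ isClosed_singleton (hstep1.1 h)
    refine ⟨f ∘ g, hfc.comp hgc, ?_⟩
    rw [hth, hfeq]
    rfl
  · -- zero-set → Čech-complete
    intro h
    apply hstep1.2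
    obtain ⟨f, hfc, hfeq⟩ := h
    have hgf : g ⁻¹' {p0} = f ⁻¹' {0} := by rw [← hth, hfeq]
    set Fn : ℕ → Set KX := fun n => (fun z => (f z : ℝ)) ⁻¹' Set.Ici (((n : ℝ) + 1)⁻¹)
      with hFn
    have hFnc : ∀ n, IsClosed (Fn n) := fun n =>
      isClosed_Ici.preimage (continuous_subtype_val.comp hfc)
    have hcl : ∀ n, IsClosed (g '' Fn n) := fun n =>
      ((hFnc n).isCompact.image hgc).isClosed
    have hcompl : ({p0}ᶜ : Set KY) = ⋃ n, g '' Fn n := by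
      apply Set.Subset.antisymm
      · intro z hz
        obtain ⟨w, rfl⟩ := hgsurj z
        have hfw : f w ≠ 0 := by
          intro h0
          apply hz
          have hw0 : w ∈ f ⁻¹' {0} := by
            rw [Set.mem_preimage, Set.mem_singleton_iff]; exact h0
          rw [← hgf] at hw0
          exact hw0
        have hfwR : ((f w : unitInterval) : ℝ) ≠ 0 := fun hc =>
          hfw (Subtype.ext (by rw [hc]; rfl))
        have hpos : (0 : ℝ) < ((f w : unitInterval) : ℝ) :=
          lt_of_le_of_ne (f w).2.1 (Ne.symm hfwR)
        obtain ⟨n, hn⟩ := exists_nat_one_div_lt hpos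
        refine Set.mem_iUnion.2 ⟨n, w, ?_, rfl⟩
        simp only [hFn, Set.mem_preimage, Set.mem_Ici]
        rw [one_div] at hn
        exact hn.le
      · intro z hz
        obtain ⟨n, hn⟩ := Set.mem_iUnion.1 hz
        obtain ⟨w, hw, rfl⟩ := hn
        intro hzp
        have hw0 : w ∈ f ⁻¹' {0} := by
          rw [← hgf]; exact hzp
        have h0 : ((f w : unitInterval) : ℝ) = 0 := by
          rw [Set.mem_preimage, Set.mem_singleton_iff] at hw0
          rw [hw0]; rfl
        simp only [hFn, Set.mem_preimage, Set.mem_Ici] at hw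
        rw [h0] at hw
        have hposn : (0 : ℝ) < ((n : ℝ) + 1)⁻¹ := by positivity
        exact absurd hw hposn.not_ge
    have hset : ({p0} : Set KY) = ⋂ n, (g '' Fn n)ᶜ := by
      rw [← Set.compl_iUnion, ← hcompl, compl_compl]
    rw [hset]
    exact .iInter_of_isOpen fun n => (hcl n).isOpen_compl
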